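/- A real square matrix is algebraically positive (i.e., there exists a real polynomial f such that f(A) has all entries positive) if and only if A has a simple real eigenvalue λ with a corresponding right eigenvector u and left eigenvector v both of which have all entries positive. -/

import Mathlib

open Polynomial Matrix Module Filter Topology

section Helpers

variable {n : ℕ}

private lemma evalCharpoly (M : Matrix (Fin n) (Fin n) ℝ) (r : ℝ) :
    M.charpoly.eval r = (r • (1 : Matrix (Fin n) (Fin n) ℝ) - M).det := by
  rw [Matrix.charpoly, eval_det, matPolyEquiv_charmatrix]
  congr 1
  rw [eval_sub, eval_X, eval_C]
  congr 1
  simp [Matrix.scalar_apply, Matrix.smul_eq_diagonal_mul]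

private lemma charpolyShift (M : Matrix (Fin n) (Fin n) ℝ) (lam : ℝ) :
    (M - lam • 1).charpoly = M.charpoly.comp (X + C lam) := by
  apply Polynomial.funext
  intro x
  rw [eval_comp, eval_add, eval_X, eval_C, evalCharpoly, evalCharpoly]
  congr 1
  rw [add_smul]
  abel

private lemma charpolyMulVecLin (M : Matrix (Fin n) (Fin n) ℝ) :
    LinearMap.charpoly (Matrix.mulVecLin M) = M.charpoly := by
  conv_rhs => rw [← LinearMap.toMatrix'_toLin' M, ← LinearMap.toMatrix_eq_toMatrix',
    Matrix.toLin'_apply']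
  rw [LinearMap.charpoly_toMatrix]

private lemma keyMult (M : Matrix (Fin n) (Fin n) ℝ) (lam : ℝ) :
    M.charpoly.rootMultiplicity lam
      = finrank ℝ (Module.End.maxGenEigenspace
          (Matrix.mulVecLin (M - lam • 1) : Module.End ℝ (Fin n → ℝ)) 0) := by
  rw [LinearMap.finrank_maxGenEigenspace_zero_eq, rootMultiplicity_eq_natTrailingDegree,
    charpolyMulVecLin, charpolyShift]

private lemma powMulVec {A : Matrix (Fin n) (Fin n) ℝ} {u : Fin n → ℝ} {lam : ℝ}
    (h : A.mulVec u = lam • u) (k : ℕ) : (A ^ k).mulVec u = lam ^ k • u := by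
  induction k with
  | zero => simp
  | succ k ih =>
      rw [pow_succ, ← Matrix.mulVec_mulVec, h, Matrix.mulVec_smul, ih, smul_smul, pow_succ]
      ring_nf

private lemma aevalMulVec {A : Matrix (Fin n) (Fin n) ℝ} {u : Fin n → ℝ} {lam : ℝ}
    (h : A.mulVec u = lam • u) (q : ℝ[X]) :
    (Polynomial.aeval A q).mulVec u = q.eval lam • u := by
  induction q using Polynomial.induction_on' with
  | add p q hp hq => rw [map_add, Matrix.add_mulVec, hp, hq, eval_add, add_smul]
  | monomial k a =>
      rw [aeval_monomial, eval_monomial]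
      rw [Algebra.algebraMap_eq_smul_one, smul_mul_assoc, one_mul, Matrix.smul_mulVec,
        powMulVec h, smul_smul]

private lemma vecMulSmulMat {A : Matrix (Fin n) (Fin n) ℝ} (a : ℝ) (v : Fin n → ℝ) :
    v ᵥ* (a • A) = a • (v ᵥ* A) := by
  ext i
  simp only [Matrix.vecMul, dotProduct, Matrix.smul_apply, Pi.smul_apply, smul_eq_mul,
    Finset.mul_sum]
  exact Finset.sum_congr rfl (fun j _ => by ring)

private lemma powVecMul {A : Matrix (Fin n) (Fin n) ℝ} {v : Fin n → ℝ} {lam : ℝ}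
    (h : A.vecMul v = lam • v) (k : ℕ) : (A ^ k).vecMul v = lam ^ k • v := by
  induction k with
  | zero => simp
  | succ k ih =>
      rw [pow_succ, ← Matrix.vecMul_vecMul, ih, Matrix.smul_vecMul, h, smul_smul, pow_succ]

private lemma aevalVecMul {A : Matrix (Fin n) (Fin n) ℝ} {v : Fin n → ℝ} {lam : ℝ}
    (h : A.vecMul v = lam • v) (q : ℝ[X]) :
    (Polynomial.aeval A q).vecMul v = q.eval lam • v := by
  induction q using Polynomial.induction_on' with
  | add p q hp hq => rw [map_add, Matrix.vecMul_add, hp, hq, eval_add, add_smul]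
  | monomial k a =>
      rw [aeval_monomial, eval_monomial]
      rw [Algebra.algebraMap_eq_smul_one, smul_mul_assoc, one_mul, vecMulSmulMat,
        powVecMul h, smul_smul]

private lemma mulVecPos {B : Matrix (Fin n) (Fin n) ℝ} (hB : ∀ i j, 0 < B i j)
    {x : Fin n → ℝ} (hx : ∀ i, 0 ≤ x i) (hx' : ∃ i, 0 < x i) :
    ∀ i, 0 < B.mulVec x i := by
  intro i
  obtain ⟨j0, hj0⟩ := hx'
  have h1 : B i j0 * x j0 ≤ ∑ j, B i j * x j :=
    Finset.single_le_sum (fun j _ => mul_nonneg (hB i j).le (hx j)) (Finset.mem_univ j0)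
  calc 0 < B i j0 * x j0 := mul_pos (hB i j0) hj0
    _ ≤ ∑ j, B i j * x j := h1
    _ = B.mulVec x i := by rw [Matrix.mulVec, dotProduct]

private lemma existsPosOfSimplex {x : Fin n → ℝ} (hx : x ∈ stdSimplex ℝ (Fin n)) :
    ∃ i, 0 < x i := by
  by_contra h
  push_neg at h
  have : ∑ i, x i ≤ 0 := Finset.sum_nonpos (fun i _ => h i)
  rw [hx.2] at this
  linarith

private lemma perron (hn : 0 < n) (B : Matrix (Fin n) (Fin n) ℝ) (hB : ∀ i j, 0 < B i j) :
    ∃ r : ℝ, 0 < r ∧ ∃ u : Fin n → ℝ, (∀ i, 0 < u i) ∧ B.mulVec u = r • u := by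
  have hne : (Finset.univ : Finset (Fin n)).Nonempty := by
    simpa [Finset.univ_nonempty_iff] using Fin.pos_iff_nonempty.mp hn
  set S := stdSimplex ℝ (Fin n) with hS
  set T : Set ℝ := {t : ℝ | ∃ x ∈ S, ∀ i, t * x i ≤ B.mulVec x i} with hT
  set x₀ : Fin n → ℝ := fun _ => (n : ℝ)⁻¹ with hx₀
  have hnR : (0 : ℝ) < n := by exact_mod_cast hn
  have hx₀S : x₀ ∈ S := by
    constructor
    · intro i; positivity
    · simp [hx₀, Finset.sum_const]
      field_simp
  have hy₀ : ∀ i, 0 < B.mulVec x₀ i :=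
    mulVecPos hB (fun i => by positivity) ⟨⟨0, hn⟩, by positivity⟩
  set m := Finset.univ.inf' hne (fun i => B.mulVec x₀ i) with hm
  have hmpos : 0 < m := by
    rw [hm, Finset.lt_inf'_iff]
    exact fun i _ => hy₀ i
  set t₀ : ℝ := m * n with ht₀
  have ht₀pos : 0 < t₀ := by positivity
  have ht₀T : t₀ ∈ T := by
    refine ⟨x₀, hx₀S, fun i => ?_⟩
    have : t₀ * x₀ i = m := by
      rw [ht₀, hx₀]
      field_simp
    rw [this]
    exact Finset.inf'_le _ (Finset.mem_univ i)
  have hTne : T.Nonempty := ⟨t₀, ht₀T⟩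
  set C : ℝ := ∑ i, ∑ j, B i j with hC
  have hbdd : BddAbove T := by
    refine ⟨C, fun t ht => ?_⟩
    obtain ⟨x, hxS, hx⟩ := ht
    obtain ⟨i, _, hi⟩ := Finset.exists_max_image Finset.univ x hne
    obtain ⟨j, hj⟩ := existsPosOfSimplex hxS
    have hxi : 0 < x i := lt_of_lt_of_le hj (hi j (Finset.mem_univ j))
    have h1 : t * x i ≤ B.mulVec x i := hx i
    have h2 : B.mulVec x i ≤ (∑ j, B i j) * x i := by
      rw [Matrix.mulVec, dotProduct, Finset.sum_mul]
      exact Finset.sum_le_sum fun j _ =>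
        mul_le_mul_of_nonneg_left (hi j (Finset.mem_univ j)) (hB i j).le
    have h3 : (∑ j, B i j) ≤ C := by
      refine Finset.single_le_sum (fun i _ => Finset.sum_nonneg fun j _ => (hB i j).le)
        (Finset.mem_univ i)
    have := le_trans h1 (le_trans h2 (mul_le_mul_of_nonneg_right h3 hxi.le))
    exact le_of_mul_le_mul_right this hxi
  set r : ℝ := sSup T with hr
  have hrpos : 0 < r := lt_of_lt_of_le ht₀pos (le_csSup hbdd ht₀T)
  have H : ∀ k : ℕ, ∃ x ∈ S, ∀ i, (r - 1 / (k + 1)) * x i ≤ B.mulVec x i := by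
    intro k
    have hpos : (0 : ℝ) < 1 / (k + 1) := by positivity
    have h1 : r - 1 / (k + 1) < r := by linarith
    obtain ⟨t, ht, hlt⟩ := exists_lt_of_lt_csSup hTne h1
    obtain ⟨x, hxS, hx⟩ := ht
    exact ⟨x, hxS, fun i =>
      le_trans (mul_le_mul_of_nonneg_right hlt.le (hxS.1 i)) (hx i)⟩
  choose xs hxsS hxs using H
  obtain ⟨u, huS, φ, hφ, hconv⟩ := (isCompact_stdSimplex ℝ (Fin n)).tendsto_subseq hxsS
  have hur : ∀ i, r * u i ≤ B.mulVec u i := by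
    intro i
    have hxsi : Tendsto (fun k => xs (φ k) i) atTop (𝓝 (u i)) :=
      ((continuous_apply i).tendsto u).comp hconv
    have hcoef : Tendsto (fun k : ℕ => r - 1 / ((φ k : ℝ) + 1)) atTop (𝓝 r) := by
      have := (tendsto_one_div_add_atTop_nhds_zero_nat (𝕜 := ℝ)).comp hφ.tendsto_atTop
      simpa using tendsto_const_nhds.sub this
    have hc1 : Tendsto (fun k => (r - 1 / ((φ k : ℝ) + 1)) * xs (φ k) i) atTop
        (𝓝 (r * u i)) := hcoef.mul hxsi
    have hBc : Continuous fun x : Fin n → ℝ => B.mulVec x i := by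
      simp only [Matrix.mulVec, dotProduct]
      exact continuous_finset_sum _ fun j _ => (continuous_const.mul (continuous_apply j))
    have hc2 : Tendsto (fun k => B.mulVec (xs (φ k)) i) atTop (𝓝 (B.mulVec u i)) :=
      (hBc.tendsto u).comp hconv
    exact le_of_tendsto_of_tendsto' hc1 hc2 fun k => hxs (φ k) i
  have hy : ∀ i, 0 < B.mulVec u i := mulVecPos hB huS.1 (existsPosOfSimplex huS)
  have heq : B.mulVec u = r • u := by
    by_contra hne2
    set d : Fin n → ℝ := B.mulVec u - r • u with hd
    have hd0 : ∀ i, 0 ≤ d i := fun i => by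
      simp only [hd, Pi.sub_apply, Pi.smul_apply, smul_eq_mul, sub_nonneg]
      exact hur i
    have hdne : ∃ j0, 0 < d j0 := by
      by_contra h
      push_neg at h
      apply hne2
      have : d = 0 := funext fun i => le_antisymm (h i) (hd0 i)
      rw [hd, sub_eq_zero] at this
      exact this
    have hBd : ∀ i, 0 < B.mulVec d i := mulVecPos hB hd0 hdne
    set y : Fin n → ℝ := B.mulVec u with hy'
    have hBdy : ∀ i, r * y i < B.mulVec y i := by
      intro i
      have heq2 : B.mulVec d i = B.mulVec y i - r * y i := by
        rw [hd, Matrix.mulVec_sub, Matrix.mulVec_smul]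
        simp [hy']
      have h2 := hBd i
      rw [heq2] at h2
      linarith
    set ε : ℝ := Finset.univ.inf' hne (fun i => (B.mulVec y i - r * y i) / y i) with hε
    have hεpos : 0 < ε := by
      rw [hε, Finset.lt_inf'_iff]
      intro i _
      have h1 := hBdy i
      have h2 := hy i
      exact div_pos (by linarith) h2
    have hεle : ∀ i, (r + ε) * y i ≤ B.mulVec y i := by
      intro i
      have h1 : ε ≤ (B.mulVec y i - r * y i) / y i := Finset.inf'_le _ (Finset.mem_univ i)
      have h2 := (le_div_iff₀ (hy i)).mp h1
      linarith
    set s : ℝ := ∑ i, y i with hs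
    have hspos : 0 < s := Finset.sum_pos (fun i _ => hy i) hne
    have hzS : s⁻¹ • y ∈ S := by
      constructor
      · intro i
        have h1 := hy i
        have h2 := inv_nonneg.mpr hspos.le
        simp only [Pi.smul_apply, smul_eq_mul]
        positivity
      · simp only [Pi.smul_apply, smul_eq_mul, ← Finset.mul_sum, ← hs]
        field_simp
    have hmem : r + ε ∈ T := by
      refine ⟨s⁻¹ • y, hzS, fun i => ?_⟩
      rw [Matrix.mulVec_smul]
      simp only [Pi.smul_apply, smul_eq_mul]
      rw [show (r + ε) * (s⁻¹ * y i) = s⁻¹ * ((r + ε) * y i) by ring]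
      exact mul_le_mul_of_nonneg_left (hεle i) (by positivity)
    have := le_csSup hbdd hmem
    rw [← hr] at this
    linarith
  have hupos : ∀ i, 0 < u i := by
    intro i
    have h2 : r * u i = B.mulVec u i := by rw [heq]; simp
    have := hy i
    nlinarith [huS.1 i]
  exact ⟨r, hrpos, u, hupos, heq⟩

private lemma eigUnique (hn : 0 < n) {B : Matrix (Fin n) (Fin n) ℝ} (hB : ∀ i j, 0 < B i j)
    {r : ℝ} {u : Fin n → ℝ} (hu : ∀ i, 0 < u i) (huE : B.mulVec u = r • u)
    {w : Fin n → ℝ} (hw : B.mulVec w = r • w) : ∃ c : ℝ, w = c • u := by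
  have hne : (Finset.univ : Finset (Fin n)).Nonempty := by
    simpa [Finset.univ_nonempty_iff] using Fin.pos_iff_nonempty.mp hn
  set c := Finset.univ.inf' hne (fun i => w i / u i) with hc
  obtain ⟨i0, _, hi0⟩ := Finset.exists_mem_eq_inf' hne (fun i => w i / u i)
  refine ⟨c, ?_⟩
  set d : Fin n → ℝ := w - c • u with hd
  have hd0 : ∀ i, 0 ≤ d i := by
    intro i
    have h1 : c ≤ w i / u i := Finset.inf'_le _ (Finset.mem_univ i)
    have h2 := (le_div_iff₀ (hu i)).mp h1
    simp only [hd, Pi.sub_apply, Pi.smul_apply, smul_eq_mul]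
    linarith
  have hdi0 : d i0 = 0 := by
    simp only [hd, Pi.sub_apply, Pi.smul_apply, smul_eq_mul]
    rw [hc, hi0, div_mul_cancel₀ _ (hu i0).ne', sub_self]
  have hdE : B.mulVec d = r • d := by
    rw [hd, Matrix.mulVec_sub, Matrix.mulVec_smul, hw, huE, smul_sub, smul_smul, smul_smul,
      mul_comm]
  by_contra hne2
  have hdne : ∃ j, 0 < d j := by
    by_contra h
    push_neg at h
    exact hne2 (by rw [← sub_eq_zero, ← hd]; exact funext fun i => le_antisymm (h i) (hd0 i))
  have := mulVecPos hB hd0 hdne i0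
  rw [hdE] at this
  simp only [Pi.smul_apply, smul_eq_mul, hdi0, mul_zero] at this
  exact lt_irrefl 0 this

end Helpers

/-- A real square matrix is algebraically positive if some real polynomial maps it
to an entrywise (strictly) positive matrix. -/
def AlgPos {n : ℕ} (A : Matrix (Fin n) (Fin n) ℝ) : Prop :=
  ∃ p : Polynomial ℝ, ∀ i j, 0 < (Polynomial.aeval A p) i j

/-- Kirkland–Qiao–Zhan: a real square matrix is algebraically positive iff it has a
simple real eigenvalue (multiplicity one as a root of the characteristic polynomial)
with entrywise positive right and left eigenvectors. -/
theorem stmt0 {n : ℕ} (hn : 0 < n) (A : Matrix (Fin n) (Fin n) ℝ) :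
    AlgPos A ↔ ∃ (lam : ℝ) (u v : Fin n → ℝ),
      A.charpoly.rootMultiplicity lam = 1 ∧
      A.mulVec u = lam • u ∧ A.vecMul v = lam • v ∧
      (∀ i, 0 < u i) ∧ (∀ i, 0 < v i) := by
  have hne : (Finset.univ : Finset (Fin n)).Nonempty := by
    simpa [Finset.univ_nonempty_iff] using Fin.pos_iff_nonempty.mp hn
  constructor
  · -- forward direction
    rintro ⟨p, hp⟩
    set P : Matrix (Fin n) (Fin n) ℝ := Polynomial.aeval A p with hPdef
    have hPT : ∀ i j, 0 < Pᵀ i j := fun i j => hp j i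
    obtain ⟨r, hr, u, hupos, huP⟩ := perron hn P hp
    obtain ⟨s, hs, v, hvpos, hvP'⟩ := perron hn Pᵀ hPT
    have hvP : P.vecMul v = s • v := by rwa [Matrix.mulVec_transpose] at hvP'
    set vu : ℝ := ∑ i, v i * u i with hvu'
    have hvu : 0 < vu := Finset.sum_pos (fun i _ => mul_pos (hvpos i) (hupos i)) hne
    have hdot : v ⬝ᵥ u = vu := by rw [hvu', dotProduct]
    -- s = r
    have hsr : s = r := by
      have h1 : v ⬝ᵥ (P.mulVec u) = r * vu := by
        rw [huP, dotProduct_smul, hdot]; simp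
      have h2 : v ⬝ᵥ (P.mulVec u) = s * vu := by
        rw [Matrix.dotProduct_mulVec, hvP, smul_dotProduct, hdot]; simp
      exact mul_right_cancel₀ hvu.ne' (h2.symm.trans h1)
    rw [hsr] at hvP hvP'
    -- A commutes with P
    have hcomm : A * P = P * A := by
      have h1 : A * P = Polynomial.aeval A (X * p) := by rw [_root_.map_mul, aeval_X]
      have h2 : P * A = Polynomial.aeval A (p * X) := by rw [_root_.map_mul, aeval_X]
      rw [h1, h2, mul_comm X p]
    -- A preserves the Perron eigenspace
    have hAu : P.mulVec (A.mulVec u) = r • A.mulVec u := by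
      rw [Matrix.mulVec_mulVec, ← hcomm, ← Matrix.mulVec_mulVec, huP, Matrix.mulVec_smul]
    obtain ⟨lam, hlam⟩ := eigUnique hn hp hupos huP hAu
    have hAv : Pᵀ.mulVec (Aᵀ.mulVec v) = r • Aᵀ.mulVec v := by
      rw [Matrix.mulVec_mulVec, ← Matrix.transpose_mul, hcomm, Matrix.transpose_mul,
        ← Matrix.mulVec_mulVec, hvP', Matrix.mulVec_smul]
    obtain ⟨mu, hmu⟩ := eigUnique hn hPT hvpos hvP' hAv
    have hmu' : A.vecMul v = mu • v := by rwa [← Matrix.mulVec_transpose]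
    -- mu = lam
    have hmulam : mu = lam := by
      have h1 : v ⬝ᵥ (A.mulVec u) = lam * vu := by
        rw [hlam, dotProduct_smul, hdot]; simp
      have h2 : v ⬝ᵥ (A.mulVec u) = mu * vu := by
        rw [Matrix.dotProduct_mulVec, hmu', smul_dotProduct, hdot]; simp
      have h3 := h2.symm.trans h1
      exact mul_right_cancel₀ hvu.ne' h3
    rw [hmulam] at hmu'
    refine ⟨lam, u, v, ?_, hlam, hmu', hupos, hvpos⟩
    -- r = p.eval lam
    have hplam : p.eval lam = r := by
      have h1 := aevalMulVec hlam p
      rw [← hPdef, huP] at h1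
      have h2 := congrFun h1 ⟨0, hn⟩
      simp only [Pi.smul_apply, smul_eq_mul] at h2
      exact mul_right_cancel₀ (hupos ⟨0, hn⟩).ne' h2.symm
    -- kernel analysis
    set φ : Module.End ℝ (Fin n → ℝ) := Matrix.mulVecLin (A - lam • 1) with hφdef
    have hφ : ∀ x, φ x = A.mulVec x - lam • x := fun x => by
      rw [hφdef, Matrix.mulVecLin_apply, Matrix.sub_mulVec, Matrix.smul_mulVec,
        Matrix.one_mulVec]
    have hu0 : u ≠ 0 := fun h => absurd (hupos ⟨0, hn⟩) (by simp [h])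
    have hφu : φ u = 0 := by rw [hφ, hlam, sub_self]
    have hker_eq : LinearMap.ker φ = Submodule.span ℝ {u} := by
      apply le_antisymm
      · intro x hx
        have hx' : A.mulVec x = lam • x := by
          have := LinearMap.mem_ker.mp hx
          rw [hφ, sub_eq_zero] at this
          exact this
        have hPx : P.mulVec x = r • x := by
          rw [hPdef, aevalMulVec hx' p, hplam]
        obtain ⟨c, hc⟩ := eigUnique hn hp hupos huP hPx
        rw [Submodule.mem_span_singleton]
        exact ⟨c, hc.symm⟩
      · rw [Submodule.span_le, Set.singleton_subset_iff]
        exact LinearMap.mem_ker.mpr hφu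
    -- ker φ² = ker φ
    have hker2 : ∀ x, φ (φ x) = 0 → φ x = 0 := by
      intro x hx
      have h1 : φ x ∈ LinearMap.ker φ := LinearMap.mem_ker.mpr hx
      rw [hker_eq, Submodule.mem_span_singleton] at h1
      obtain ⟨c, hc⟩ := h1
      have hvx : v ⬝ᵥ (φ x) = 0 := by
        rw [hφ, dotProduct_sub, Matrix.dotProduct_mulVec, hmu',
          smul_dotProduct, dotProduct_smul]
        simp
      rw [← hc, dotProduct_smul, hdot] at hvx
      simp only [smul_eq_mul] at hvx
      have hc0 : c = 0 := by
        rcases mul_eq_zero.mp hvx with h | h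
        · exact h
        · exact absurd h hvu.ne'
      rw [← hc, hc0, zero_smul]
    have hkerpow : ∀ k, ∀ x : Fin n → ℝ, (φ ^ k) x = 0 → φ x = 0 ∨ x = 0 := by
      intro k
      induction k with
      | zero => intro x hx; right; simpa using hx
      | succ k ih =>
          intro x hx
          rw [pow_succ, Module.End.mul_apply] at hx
          rcases ih (φ x) hx with h | h
          · exact Or.inl (hker2 x h)
          · exact Or.inl h
    -- maxGenEigenspace = span u
    have hmem_max : ∀ x : Fin n → ℝ,
        x ∈ Module.End.maxGenEigenspace φ 0 ↔ ∃ k, (φ ^ k) x = 0 := by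
      intro x
      rw [Module.End.mem_maxGenEigenspace]
      simp
    have hmax_eq : Module.End.maxGenEigenspace φ 0 = Submodule.span ℝ {u} := by
      apply le_antisymm
      · intro x hx
        obtain ⟨k, hk⟩ := (hmem_max x).mp hx
        rcases hkerpow k x hk with h | h
        · rw [← hker_eq]; exact LinearMap.mem_ker.mpr h
        · rw [h]; exact Submodule.zero_mem _
      · intro x hx
        refine (hmem_max x).mpr ⟨1, ?_⟩
        rw [pow_one]
        rw [← hker_eq] at hx
        exact LinearMap.mem_ker.mp hx
    rw [keyMult A lam, ← hφdef, hmax_eq]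
    exact finrank_span_singleton hu0
  · -- backward direction
    rintro ⟨lam, u, v, hmult, hu, hv, hupos, hvpos⟩
    set φ : Module.End ℝ (Fin n → ℝ) := Matrix.mulVecLin (A - lam • 1) with hφdef
    have hφ : ∀ x, φ x = A.mulVec x - lam • x := fun x => by
      rw [hφdef, Matrix.mulVecLin_apply, Matrix.sub_mulVec, Matrix.smul_mulVec,
        Matrix.one_mulVec]
    have hu0 : u ≠ 0 := fun h => absurd (hupos ⟨0, hn⟩) (by simp [h])
    have hφu : φ u = 0 := by rw [hφ, hu, sub_self]
    have hspan_le : Submodule.span ℝ {u} ≤ LinearMap.ker φ := by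
      rw [Submodule.span_le, Set.singleton_subset_iff]
      exact LinearMap.mem_ker.mpr hφu
    have hmem_max : ∀ x : Fin n → ℝ,
        x ∈ Module.End.maxGenEigenspace φ 0 ↔ ∃ k, (φ ^ k) x = 0 := by
      intro x
      rw [Module.End.mem_maxGenEigenspace]
      simp
    have hker_le_max : LinearMap.ker φ ≤ Module.End.maxGenEigenspace φ 0 := by
      intro x hx
      exact (hmem_max x).mpr ⟨1, by simpa [pow_one] using hx⟩
    have hfr : finrank ℝ (Module.End.maxGenEigenspace φ 0) = 1 := by
      rw [← keyMult A lam]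
      exact hmult
    have h1 : finrank ℝ (Submodule.span ℝ {u}) = 1 := finrank_span_singleton hu0
    have hspan_eq : Submodule.span ℝ {u} = Module.End.maxGenEigenspace φ 0 :=
      Submodule.eq_of_le_of_finrank_le (le_trans hspan_le hker_le_max) (by rw [hfr, h1])
    have hker_eq : LinearMap.ker φ = Submodule.span ℝ {u} :=
      le_antisymm (hspan_eq ▸ hker_le_max) hspan_le
    -- factor the characteristic polynomial
    have hcp0 : A.charpoly ≠ 0 := A.charpoly_monic.ne_zero
    have hroot : IsRoot A.charpoly lam := by
      rw [← Polynomial.rootMultiplicity_pos hcp0]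
      omega
    obtain ⟨g, hg⟩ := Polynomial.dvd_iff_isRoot.mpr hroot
    have hglam : g.eval lam ≠ 0 := by
      intro h
      obtain ⟨g', hg'⟩ := Polynomial.dvd_iff_isRoot.mpr h
      have hdvd : (X - C lam) ^ 2 ∣ A.charpoly := ⟨g', by rw [hg, hg']; ring⟩
      have := (Polynomial.le_rootMultiplicity_iff hcp0).mpr hdvd
      omega
    set G := Polynomial.aeval A g with hGdef
    have hAG : (A - lam • 1) * G = 0 := by
      have hCH := A.aeval_self_charpoly
      rw [hg, _root_.map_mul] at hCH
      have : (Polynomial.aeval A) (X - C lam) = A - lam • 1 := by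
        rw [map_sub, aeval_X, aeval_C, Algebra.algebraMap_eq_smul_one]
      rwa [this] at hCH
    have hcol : ∀ z : Fin n → ℝ, ∃ c : ℝ, G.mulVec z = c • u := by
      intro z
      have h0 : φ (G.mulVec z) = 0 := by
        rw [hφdef, Matrix.mulVecLin_apply, Matrix.mulVec_mulVec, hAG, Matrix.zero_mulVec]
      have := hker_eq ▸ LinearMap.mem_ker.mpr h0
      rw [Submodule.mem_span_singleton] at this
      obtain ⟨a, ha⟩ := this
      exact ⟨a, ha.symm⟩
    choose w hw using fun j => hcol (Pi.single j 1)
    have hGij : ∀ i j, G i j = w j * u i := by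
      intro i j
      have h1 : G.mulVec (Pi.single j 1) i = G i j := by
        simp [Matrix.mulVec_single]
      rw [hw j] at h1
      simpa using h1.symm
    -- left eigenvector relation
    have hvG : G.vecMul v = g.eval lam • v := aevalVecMul hv g
    set vu : ℝ := ∑ i, v i * u i with hvu'
    have hvu : 0 < vu := Finset.sum_pos (fun i _ => mul_pos (hvpos i) (hupos i)) hne
    have hwj : ∀ j, w j = g.eval lam * v j / vu := by
      intro j
      have h1 : G.vecMul v j = vu * w j := by
        rw [Matrix.vecMul, dotProduct, hvu', Finset.sum_mul]
        exact Finset.sum_congr rfl fun i _ => by rw [hGij]; ring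
      have h2 : G.vecMul v j = g.eval lam * v j := by rw [hvG]; simp
      rw [h2] at h1
      field_simp
      linarith
    set c0 : ℝ := g.eval lam / vu with hc0def
    have hGij' : ∀ i j, G i j = c0 * (v j * u i) := by
      intro i j
      rw [hGij, hwj, hc0def]
      ring
    have hc0ne : c0 ≠ 0 := div_ne_zero hglam hvu.ne'
    rcases lt_or_gt_of_ne hc0ne with hneg | hpos
    · refine ⟨-g, fun i j => ?_⟩
      rw [map_neg]
      have : (-(Polynomial.aeval A) g) i j = -(G i j) := by simp [hGdef]
      rw [this, hGij']
      have := mul_pos (hvpos j) (hupos i)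
      nlinarith
    · refine ⟨g, fun i j => ?_⟩
      have : (Polynomial.aeval A) g i j = G i j := by rw [hGdef]
      rw [this, hGij']
      have := mul_pos (hvpos j) (hupos i)
      nlinarith
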